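/- Let C, C₁, η, θ > 0. There is no measurable function P : [0, ∞) → [0, ∞) such that both (i) ∫₀^∞ e^{−λt} P(t) dt < ∞ for every λ > 0, and (ii) P(t) ≥ C + C₁ ∫₀ᵗ P(s)^{1+η} (t−s)^θ ds for all t ≥ 0. -/

import Mathlib

open MeasureTheory Set

/-- Crude first iteration step. -/
lemma blowup_step0 {C₁ η θ : ℝ} (hC₁ : 0 < C₁) (hη : 0 < η) (hθ : 0 < θ)
    {P : ℝ → ℝ} (hP0 : ∀ t, 0 ≤ P t)
    (hineq : ∀ t : ℝ, 0 ≤ t →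
      ENNReal.ofReal C₁ *
        (∫⁻ s in Set.Ioo 0 t, ENNReal.ofReal (P s ^ (1 + η) * (t - s) ^ θ))
        ≤ ENNReal.ofReal (P t))
    {a : ℝ} (ha : 0 < a)
    (h : ∀ t : ℝ, 0 ≤ t → a ≤ P t) :
    ∀ t : ℝ, 0 ≤ t →
      (C₁ * a ^ (1 + η) / 4 ^ (θ + 1)) * t ^ (θ + 1) ≤ P t := by
  intro t ht
  rcases ht.eq_or_lt with rfl | htpos
  · rw [Real.zero_rpow (by positivity), mul_zero]
    exact hP0 0
  · set c' : ℝ := a ^ (1 + η) * (t / 4) ^ θ with hc'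
    have hc'0 : 0 ≤ c' := by positivity
    have hsub : Set.Ioo (t / 2) (3 * t / 4) ⊆ Set.Ioo 0 t :=
      Set.Ioo_subset_Ioo (by linarith) (by linarith)
    have hkey : ENNReal.ofReal c' * ENNReal.ofReal (t / 4)
        ≤ ∫⁻ s in Set.Ioo 0 t, ENNReal.ofReal (P s ^ (1 + η) * (t - s) ^ θ) := by
      have h1 : ENNReal.ofReal c' * ENNReal.ofReal (t / 4)
          = ∫⁻ _s in Set.Ioo (t / 2) (3 * t / 4), ENNReal.ofReal c' := by
        rw [setLIntegral_const, Real.volume_Ioo]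
        congr 1
        ring_nf
      rw [h1]
      refine le_trans (setLIntegral_mono' measurableSet_Ioo ?_)
        (lintegral_mono_set hsub)
      intro s hs
      apply ENNReal.ofReal_le_ofReal
      have hs0 : 0 < s := lt_of_le_of_lt (by linarith) hs.1
      have h2 : a ^ (1 + η) ≤ P s ^ (1 + η) :=
        Real.rpow_le_rpow ha.le (h s hs0.le) (by linarith)
      have h3 : (t / 4) ^ θ ≤ (t - s) ^ θ :=
        Real.rpow_le_rpow (by linarith) (by linarith [hs.2]) hθ.le
      exact mul_le_mul h2 h3 (by positivity) (Real.rpow_nonneg (hP0 s) _)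
    have hmain : ENNReal.ofReal (C₁ * (c' * (t / 4))) ≤ ENNReal.ofReal (P t) := by
      rw [ENNReal.ofReal_mul hC₁.le, ENNReal.ofReal_mul hc'0]
      exact le_trans (mul_le_mul_right hkey _) (hineq t ht)
    have hreal : C₁ * (c' * (t / 4)) ≤ P t :=
      (ENNReal.ofReal_le_ofReal_iff (hP0 t)).mp hmain
    refine le_trans (le_of_eq ?_) hreal
    rw [hc', Real.div_rpow htpos.le (by norm_num : (0:ℝ) ≤ 4),
      Real.rpow_add htpos, Real.rpow_one,
      Real.rpow_add (by norm_num : (0:ℝ) < 4), Real.rpow_one]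
    have h4ne : (4:ℝ) ^ θ ≠ 0 := by positivity
    field_simp

/-- Sharp iteration step for exponent `p ≥ 1`. -/
lemma blowup_step {C₁ η θ : ℝ} (hC₁ : 0 < C₁) (hη : 0 < η) (hθ : 0 < θ)
    {P : ℝ → ℝ} (hP0 : ∀ t, 0 ≤ P t)
    (hineq : ∀ t : ℝ, 0 ≤ t →
      ENNReal.ofReal C₁ *
        (∫⁻ s in Set.Ioo 0 t, ENNReal.ofReal (P s ^ (1 + η) * (t - s) ^ θ))
        ≤ ENNReal.ofReal (P t))
    {a p : ℝ} (ha : 0 < a) (hp : 1 ≤ p)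
    (h : ∀ t : ℝ, 0 ≤ t → a * t ^ p ≤ P t) :
    ∀ t : ℝ, 0 ≤ t →
      (C₁ * a ^ (1 + η) / (2 ^ (1 + η) * (4 * p) ^ (θ + 1)))
        * t ^ (p * (1 + η) + θ + 1) ≤ P t := by
  intro t ht
  have hp0 : 0 < p := by linarith
  rcases ht.eq_or_lt with rfl | htpos
  · rw [Real.zero_rpow (by positivity), mul_zero]
    exact hP0 0
  · set c' : ℝ := (a * t ^ p / 2) ^ (1 + η) * (t / (4 * p)) ^ θ with hc'
    have hc'0 : 0 ≤ c' := by positivity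
    have hq2 : 1 / (2 * p) ≤ 1 / 2 := by
      rw [div_le_div_iff₀ (by linarith) (by norm_num)]
      nlinarith
    have hq4 : 0 < 1 / (4 * p) := by positivity
    have hq42 : 1 / (4 * p) < 1 / (2 * p) := by
      rw [div_lt_div_iff₀ (by linarith) (by linarith)]
      nlinarith
    have hlo : 0 < t * (1 - 1 / (2 * p)) := by nlinarith
    have hsub : Set.Ioo (t * (1 - 1 / (2 * p))) (t * (1 - 1 / (4 * p))) ⊆ Set.Ioo 0 t :=
      Set.Ioo_subset_Ioo (by nlinarith) (by nlinarith)
    have hlen : t * (1 - 1 / (4 * p)) - t * (1 - 1 / (2 * p)) = t / (4 * p) := by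
      field_simp
      ring
    have hkey : ENNReal.ofReal c' * ENNReal.ofReal (t / (4 * p))
        ≤ ∫⁻ s in Set.Ioo 0 t, ENNReal.ofReal (P s ^ (1 + η) * (t - s) ^ θ) := by
      have h1 : ENNReal.ofReal c' * ENNReal.ofReal (t / (4 * p))
          = ∫⁻ _s in Set.Ioo (t * (1 - 1 / (2 * p))) (t * (1 - 1 / (4 * p))),
              ENNReal.ofReal c' := by
        rw [setLIntegral_const, Real.volume_Ioo, hlen]
      rw [h1]
      refine le_trans (setLIntegral_mono' measurableSet_Ioo ?_)
        (lintegral_mono_set hsub)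
      intro s hs
      apply ENNReal.ofReal_le_ofReal
      have hs0 : 0 < s := lt_trans hlo hs.1
      -- Bernoulli: (1 - 1/(2p))^p ≥ 1 - p/(2p) = 1/2
      have hbern : (1:ℝ) / 2 ≤ (1 - 1 / (2 * p)) ^ p := by
        have hb := one_add_mul_self_le_rpow_one_add
          (show (-1:ℝ) ≤ -(1 / (2 * p)) by nlinarith) hp
        have he : 1 + p * (-(1 / (2 * p))) = 1 / 2 := by
          field_simp
          ring
        rw [he] at hb
        have : (1:ℝ) + -(1 / (2 * p)) = 1 - 1 / (2 * p) := by ring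
        rwa [this] at hb
      have hP1 : a * t ^ p / 2 ≤ P s := by
        refine le_trans ?_ (h s hs0.le)
        have h1s : (t * (1 - 1 / (2 * p))) ^ p ≤ s ^ p :=
          Real.rpow_le_rpow hlo.le hs.1.le hp0.le
        rw [Real.mul_rpow htpos.le (by nlinarith)] at h1s
        have h2s : t ^ p * (1 / 2) ≤ t ^ p * (1 - 1 / (2 * p)) ^ p :=
          mul_le_mul_of_nonneg_left hbern (Real.rpow_nonneg htpos.le _)
        have h3s : a * (t ^ p * (1 / 2)) ≤ a * s ^ p :=
          mul_le_mul_of_nonneg_left (le_trans h2s h1s) ha.le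
        linarith [h3s]
      have h2 : (a * t ^ p / 2) ^ (1 + η) ≤ P s ^ (1 + η) :=
        Real.rpow_le_rpow (by positivity) hP1 (by linarith)
      have h3 : (t / (4 * p)) ^ θ ≤ (t - s) ^ θ := by
        refine Real.rpow_le_rpow (by positivity) ?_ hθ.le
        have := hs.2
        have hts : t * (1 - 1 / (4 * p)) = t - t / (4 * p) := by ring
        rw [hts] at this
        linarith
      exact mul_le_mul h2 h3 (by positivity) (Real.rpow_nonneg (hP0 s) _)
    have hmain : ENNReal.ofReal (C₁ * (c' * (t / (4 * p)))) ≤ ENNReal.ofReal (P t) := by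
      rw [ENNReal.ofReal_mul hC₁.le, ENNReal.ofReal_mul hc'0]
      exact le_trans (mul_le_mul_right hkey _) (hineq t ht)
    have hreal : C₁ * (c' * (t / (4 * p))) ≤ P t :=
      (ENNReal.ofReal_le_ofReal_iff (hP0 t)).mp hmain
    refine le_trans (le_of_eq ?_) hreal
    rw [hc',
      Real.div_rpow (by positivity) (by norm_num : (0:ℝ) ≤ 2),
      Real.mul_rpow ha.le (by positivity),
      ← Real.rpow_mul htpos.le,
      Real.div_rpow htpos.le (by positivity : (0:ℝ) ≤ 4 * p),
      show p * (1 + η) + θ + 1 = p * (1 + η) + (θ + 1) by ring,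
      Real.rpow_add htpos, Real.rpow_add htpos, Real.rpow_one,
      Real.rpow_add (by positivity : (0:ℝ) < 4 * p), Real.rpow_one]
    have h2ne : (2:ℝ) ^ (1 + η) ≠ 0 := by positivity
    have h4ne : (4 * p) ^ θ ≠ 0 := by positivity
    field_simp

/-- Laplace-transform blow-up argument of Remark 1.2.
Let `C, C₁, η, θ > 0`.  There is no measurable function `P : [0, ∞) → [0, ∞)`
such that both (i) `∫₀^∞ e^(-λt) P(t) dt < ∞` for every `λ > 0`, and
(ii) `P t ≥ C + C₁ ∫₀ᵗ P(s)^(1+η) (t-s)^θ ds` for all `t ≥ 0`. -/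
theorem no_laplace_transformable_solution_power_kernel
    (C C₁ η θ : ℝ) (hC : 0 < C) (hC₁ : 0 < C₁) (hη : 0 < η) (hθ : 0 < θ) :
    ¬ ∃ P : ℝ → ℝ,
      Measurable P ∧ (∀ t, 0 ≤ P t) ∧
      (∀ l : ℝ, 0 < l →
        (∫⁻ t in Set.Ioi (0 : ℝ), ENNReal.ofReal (Real.exp (-l * t) * P t)) < ⊤) ∧
      (∀ t : ℝ, 0 ≤ t →
        ENNReal.ofReal C
          + ENNReal.ofReal C₁ *
            ∫⁻ s in Set.Ioo 0 t, ENNReal.ofReal (P s ^ (1 + η) * (t - s) ^ θ)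
          ≤ ENNReal.ofReal (P t)) := by
  rintro ⟨P, _hPm, hP0, _hLap, hP⟩
  have hineq : ∀ t : ℝ, 0 ≤ t →
      ENNReal.ofReal C₁ *
        (∫⁻ s in Set.Ioo 0 t, ENNReal.ofReal (P s ^ (1 + η) * (t - s) ^ θ))
        ≤ ENNReal.ofReal (P t) :=
    fun t ht => le_trans le_add_self (hP t ht)
  have hbase : ∀ t : ℝ, 0 ≤ t → C ≤ P t := fun t ht =>
    (ENNReal.ofReal_le_ofReal_iff (hP0 t)).mp (le_trans le_self_add (hP t ht))
  -- first iteration: polynomial lower bound with exponent θ + 1 ≥ 1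
  set a₁ : ℝ := C₁ * C ^ (1 + η) / 4 ^ (θ + 1) with ha₁def
  have ha₁ : 0 < a₁ := by positivity
  have hfirst : ∀ t : ℝ, 0 ≤ t → a₁ * t ^ (θ + 1) ≤ P t :=
    blowup_step0 hC₁ hη hθ hP0 hineq hC hbase
  -- iterate the sharp step
  set g : ℝ × ℝ → ℝ × ℝ := fun q =>
    (C₁ * q.1 ^ (1 + η) / (2 ^ (1 + η) * (4 * q.2) ^ (θ + 1)), q.2 * (1 + η) + θ + 1)
    with hg
  set f : ℕ → ℝ × ℝ := fun n => g^[n] (a₁, θ + 1) with hf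
  have hfs : ∀ n, f (n + 1) = g (f n) := fun n => Function.iterate_succ_apply' g n _
  have hf0 : f 0 = (a₁, θ + 1) := rfl
  have hfP : ∀ n, 0 < (f n).1 ∧ 1 ≤ (f n).2 ∧
      ∀ t : ℝ, 0 ≤ t → (f n).1 * t ^ (f n).2 ≤ P t := by
    intro n
    induction n with
    | zero => exact ⟨ha₁, by rw [hf0]; simp; linarith, by rw [hf0]; exact hfirst⟩
    | succ n ih =>
      obtain ⟨h1, h2, h3⟩ := ih
      rw [hfs n]
      have hgc : (g (f n)).1
          = C₁ * (f n).1 ^ (1 + η) / (2 ^ (1 + η) * (4 * (f n).2) ^ (θ + 1)) := rfl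
      have hge : (g (f n)).2 = (f n).2 * (1 + η) + θ + 1 := rfl
      rw [hgc, hge]
      have h4p : (0:ℝ) < 4 * (f n).2 := by linarith
      refine ⟨?_, by nlinarith, blowup_step hC₁ hη hθ hP0 hineq h1 h2 h3⟩
      exact div_pos (mul_pos hC₁ (Real.rpow_pos_of_pos h1 _))
        (mul_pos (Real.rpow_pos_of_pos (by norm_num) _) (Real.rpow_pos_of_pos h4p _))
  -- growth of the exponents
  set K : ℝ := (θ + 1) * (1 + 1 / η) with hK
  have hK0 : 0 < K := by positivity
  have hpub : ∀ n, (f n).2 + (θ + 1) / η ≤ K * (1 + η) ^ n := by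
    intro n
    induction n with
    | zero =>
      rw [hf0]
      simp only [pow_zero, mul_one, hK]
      rw [mul_one_add]
      apply le_of_eq
      field_simp
    | succ n ih =>
      have hge : (f (n + 1)).2 = (f n).2 * (1 + η) + θ + 1 := by rw [hfs n]
      have hid : (f n).2 * (1 + η) + θ + 1 + (θ + 1) / η
          = (1 + η) * ((f n).2 + (θ + 1) / η) := by
        field_simp
        ring
      rw [hge, hid, pow_succ]
      calc (1 + η) * ((f n).2 + (θ + 1) / η)
          ≤ (1 + η) * (K * (1 + η) ^ n) := by
            exact mul_le_mul_of_nonneg_left ih (by linarith)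
        _ = K * ((1 + η) ^ n * (1 + η)) := by ring
  set A : ℝ := (θ + 1) * Real.log (4 * K) with hA
  set B : ℝ := (θ + 1) * Real.log (1 + η) with hB
  have hB0 : 0 ≤ B := by
    have : (0:ℝ) ≤ Real.log (1 + η) := Real.log_nonneg (by linarith)
    positivity
  have hlogp : ∀ n, (θ + 1) * Real.log (4 * (f n).2) ≤ A + B * n := by
    intro n
    obtain ⟨_, h2, _⟩ := hfP n
    have hc : (0:ℝ) ≤ (θ + 1) / η := by positivity
    have hple : (f n).2 ≤ K * (1 + η) ^ n := by
      have := hpub n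
      linarith
    have hlog1 : Real.log (4 * (f n).2) ≤ Real.log (4 * (K * (1 + η) ^ n)) :=
      Real.log_le_log (by linarith) (by nlinarith)
    have hlog2 : Real.log (4 * (K * (1 + η) ^ n))
        = Real.log (4 * K) + n * Real.log (1 + η) := by
      rw [show (4:ℝ) * (K * (1 + η) ^ n) = (4 * K) * (1 + η) ^ n by ring,
        Real.log_mul (by positivity) (by positivity), Real.log_pow]
    have := mul_le_mul_of_nonneg_left hlog1 (show (0:ℝ) ≤ θ + 1 by linarith)
    rw [hlog2] at this
    calc (θ + 1) * Real.log (4 * (f n).2)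
        ≤ (θ + 1) * (Real.log (4 * K) + n * Real.log (1 + η)) := this
      _ = A + B * n := by rw [hA, hB]; ring
  -- choice of the evaluation point T
  set M₁ : ℝ := (B / η + 1 + |Real.log a₁|) / (θ + 1) with hM₁
  set M₂ : ℝ := (1 + B / η + A + (1 + η) * Real.log 2 + |Real.log C₁|) / (θ + 1) with hM₂
  set M : ℝ := max M₁ M₂ with hM
  set T : ℝ := Real.exp M with hTdef
  have hT0 : 0 < T := Real.exp_pos M
  have hlogT : Real.log T = M := Real.log_exp M
  set u : ℕ → ℝ := fun n => Real.log (f n).1 + (f n).2 * M with hu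
  set D : ℝ := Real.log C₁ - (1 + η) * Real.log 2 + (θ + 1) * M with hD
  have hθ1M : (θ + 1) * M₂ ≤ (θ + 1) * M :=
    mul_le_mul_of_nonneg_left (le_max_right _ _) (by linarith)
  have hM₂e : (θ + 1) * M₂ = 1 + B / η + A + (1 + η) * Real.log 2 + |Real.log C₁| := by
    rw [hM₂]
    field_simp
  have hDge : 1 + B / η + A ≤ D := by
    have h1 : -|Real.log C₁| ≤ Real.log C₁ := neg_abs_le _
    rw [hD]
    rw [hM₂e] at hθ1M
    linarith
  have hurec : ∀ n, (1 + η) * u n + D - (A + B * n) ≤ u (n + 1) := by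
    intro n
    obtain ⟨h1, h2, _⟩ := hfP n
    have h4p : (0:ℝ) < 4 * (f n).2 := by linarith
    have hlogf : Real.log (f (n + 1)).1
        = Real.log C₁ + (1 + η) * Real.log (f n).1
          - (1 + η) * Real.log 2 - (θ + 1) * Real.log (4 * (f n).2) := by
      rw [hfs n]
      have hgc : (g (f n)).1
          = C₁ * (f n).1 ^ (1 + η) / (2 ^ (1 + η) * (4 * (f n).2) ^ (θ + 1)) := rfl
      rw [hgc, Real.log_div (by positivity) (by positivity),
        Real.log_mul hC₁.ne' (by positivity),
        Real.log_mul (by positivity) (by positivity),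
        Real.log_rpow h1, Real.log_rpow (by norm_num : (0:ℝ) < 2),
        Real.log_rpow h4p]
      ring
    have hexp2 : (f (n + 1)).2 = (f n).2 * (1 + η) + θ + 1 := by rw [hfs n]
    have hlp := hlogp n
    simp only [hu, hlogf, hexp2, hD]
    nlinarith [hlp]
  have hu0 : B / η + 1 ≤ u 0 := by
    have hθ1M1 : (θ + 1) * M₁ ≤ (θ + 1) * M :=
      mul_le_mul_of_nonneg_left (le_max_left _ _) (by linarith)
    have hM₁e : (θ + 1) * M₁ = B / η + 1 + |Real.log a₁| := by
      rw [hM₁]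
      field_simp
    have h1 : -|Real.log a₁| ≤ Real.log a₁ := neg_abs_le _
    have : u 0 = Real.log a₁ + (θ + 1) * M := rfl
    rw [this]
    rw [hM₁e] at hθ1M1
    linarith
  clear_value a₁ g f K A B M₁ M₂ M T u D
  have hun : ∀ n : ℕ, (n : ℝ) + (B / η) * ((n : ℝ) + 1) + 1 ≤ u n := by
    intro n
    induction n with
    | zero =>
      have := hu0
      push_cast
      linarith
    | succ n ih =>
      have h2 := hurec n
      have h3 : η * ((n : ℝ) + (B / η) * ((n : ℝ) + 1) + 1) ≤ η * u n :=
        mul_le_mul_of_nonneg_left ih hη.le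
      have h4 : η * ((n : ℝ) + (B / η) * ((n : ℝ) + 1) + 1)
          = η * (n : ℝ) + B * ((n : ℝ) + 1) + η := by
        field_simp
      rw [h4] at h3
      have hn0 : (0:ℝ) ≤ (n : ℝ) := Nat.cast_nonneg n
      have h6 : (B / η) * ((n : ℝ) + 1 + 1) = (B / η) * ((n : ℝ) + 1) + B / η := by ring
      have h7 : 0 ≤ η * (n : ℝ) := mul_nonneg hη.le hn0
      have h8 : 1 ≤ η * (B / η) + 1 := by
        have : η * (B / η) = B := by field_simp
        linarith
      push_cast
      linarith [ih, h2, hDge, hB0]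
  have hexpu : ∀ n : ℕ, Real.exp (u n) ≤ P T := by
    intro n
    obtain ⟨h1, h2, h3⟩ := hfP n
    have he : Real.exp (u n) = (f n).1 * T ^ (f n).2 := by
      rw [hu]
      rw [Real.exp_add, Real.exp_log h1,
        Real.rpow_def_of_pos hT0, hlogT, mul_comm M]
    rw [he]
    exact h3 T hT0.le
  have hA2 := hun (⌈P T⌉₊ + 1)
  have hB2 := hexpu (⌈P T⌉₊ + 1)
  have hCc := Real.add_one_le_exp (u (⌈P T⌉₊ + 1))
  have hD2 : P T ≤ (⌈P T⌉₊ : ℝ) := Nat.le_ceil _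
  push_cast at hA2
  have hB3 : 0 ≤ B / η * ((⌈P T⌉₊ : ℝ) + 1 + 1) := by positivity
  linarith
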